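/- For every natural number k, the matrix ring M_{8k+4}(𝔽₂) is not nil-clean of index at most 3; that is, there exists a matrix A ∈ M_{8k+4}(𝔽₂) such that there are no P, Q ∈ M_{8k+4}(𝔽₂) with P² = P, Q³ = 0, and A = P + Q. -/
import Mathlib

open Matrix

def Cmat : Matrix (Fin 4) (Fin 4) (ZMod 2) :=
  !![0,0,0,1; 1,0,0,1; 0,1,0,1; 0,0,1,1]

lemma Cmat_pow : Cmat^4 = Cmat^3 + Cmat^2 + Cmat + 1 := by decide

lemma Cmat_trace : trace ((1 : Matrix (Fin 4) (Fin 4) (ZMod 2)) + Cmat + Cmat^2 + Cmat^3) = 1 := by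
  decide

set_option maxHeartbeats 2000000 in
lemma key {n : ℕ} (A P : Matrix (Fin n) (Fin n) (ZMod 2)) (hP : P*P = P)
    (hA : A^4 = A^3 + A^2 + A + 1) :
    trace ((A + P + P*A) * ((A+P)*((A+P)*(A+P)))) =
      trace ((1 : Matrix (Fin n) (Fin n) (ZMod 2)) + A + A^2 + A^3) := by
  have e1 : (A + P + P*A) * ((A+P)*((A+P)*(A+P))) =
      A^4 + (A^3*P + ((A^2*P)*A + (A^2*(P*P) + ((A*P)*A^2 + ((A*P)*(A*P) +
      ((A*(P*P))*A + A*(P*(P*P)))))))) +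
      (P*A^3 + ((P*A^2)*P + (P*(A*(P*A)) + ((P*A)*(P*P) + ((P*P)*A^2 +
      (((P*P)*A)*P + ((P*(P*P))*A + P*(P*(P*P))))))))) +
      (P*A^4 + ((P*A^3)*P + (P*(A^2*(P*A)) + ((P*A^2)*(P*P) + (((P*A)*P)*A^2 +
      (P*(A*(P*(A*P))) + ((P*A)*((P*P)*A) + (P*A)*(P*(P*P))))))))) := by
    noncomm_ring
  simp only [hP] at e1
  rw [hA] at e1
  rw [e1]
  simp only [mul_add, mul_one, trace_add]
  have c1 : trace ((A^2*P)*A) = trace (A^3*P) := by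
    rw [trace_mul_comm]; congr 1; noncomm_ring
  have c2 : trace ((A*P)*A^2) = trace (A^3*P) := by
    rw [trace_mul_comm]; congr 1; noncomm_ring
  have c3 : trace (P*A^3) = trace (A^3*P) := trace_mul_comm _ _
  have c4 : trace ((P*A^3)*P) = trace (A^3*P) := by
    rw [trace_mul_comm, show P*(P*A^3) = (P*P)*A^3 from by noncomm_ring, hP,
      trace_mul_comm]
  have c5 : trace ((A*P)*A) = trace (A^2*P) := by
    rw [trace_mul_comm]; congr 1; noncomm_ring
  have c6 : trace ((P*A^2)*P) = trace (A^2*P) := by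
    rw [trace_mul_comm, show P*(P*A^2) = (P*P)*A^2 from by noncomm_ring, hP,
      trace_mul_comm]
  have c7 : trace (P*A^2) = trace (A^2*P) := trace_mul_comm _ _
  have c8 : trace ((P*A)*P) = trace (A*P) := by
    rw [trace_mul_comm, show P*(P*A) = (P*P)*A from by noncomm_ring, hP,
      trace_mul_comm]
  have c9 : trace (P*A) = trace (A*P) := trace_mul_comm _ _
  have c10 : trace (P*(A*(P*A))) = trace ((A*P)*(A*P)) := by
    rw [trace_mul_comm]; congr 1; noncomm_ring
  have c11 : trace (P*(A*(P*(A*P)))) = trace ((A*P)*(A*P)) := by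
    rw [trace_mul_comm, show (A*(P*(A*P)))*P = ((A*P)*A)*(P*P) from by noncomm_ring, hP]
    congr 1; noncomm_ring
  have c12 : trace ((P*A)*(P*A)) = trace ((A*P)*(A*P)) := by
    rw [show (P*A)*(P*A) = P*(A*(P*A)) from by noncomm_ring]; exact c10
  have c13 : trace (P*(A^2*(P*A))) = trace ((A^2*(P*A))*P) := trace_mul_comm _ _
  have c14 : trace (((P*A)*P)*A^2) = trace ((A^2*(P*A))*P) := by
    rw [trace_mul_comm]; congr 1; noncomm_ring
  rw [c1, c2, c3, c4, c5, c6, c7, c8, c9, c10, c11, c12, c13, c14]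
  have htwo : (2 : ZMod 2) = 0 := by decide
  linear_combination (3*trace (A^3*P) + 3*trace (A^2*P) + 3*trace (A*P) +
    2*trace ((A*P)*(A*P)) + trace P + trace ((A^2*(P*A))*P)) * htwo

theorem stmt_6 (k : ℕ) :
    ∃ A : Matrix (Fin (8 * k + 4)) (Fin (8 * k + 4)) (ZMod 2),
      ¬ ∃ P Q : Matrix (Fin (8 * k + 4)) (Fin (8 * k + 4)) (ZMod 2),
        P ^ 2 = P ∧ Q ^ 3 = 0 ∧ A = P + Q := by
  classical
  set m := 2 * k + 1 with hm
  have hcard : 4 * m = 8 * k + 4 := by omega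
  let e : (Fin 4 × Fin m) ≃ Fin (8 * k + 4) :=
    finProdFinEquiv.trans (finCongr hcard)
  let Φ := Matrix.reindexAlgEquiv (ZMod 2) (ZMod 2) e
  let f : Fin m → Matrix (Fin 4) (Fin 4) (ZMod 2) := fun _ => Cmat
  let M : Matrix (Fin 4 × Fin m) (Fin 4 × Fin m) (ZMod 2) := blockDiagonal f
  refine ⟨Φ M, ?_⟩
  rintro ⟨P, Q, hP, hQ, hPQ⟩
  set A : Matrix (Fin (8 * k + 4)) (Fin (8 * k + 4)) (ZMod 2) := Φ M with hA
  have hf : f^4 = f^3 + f^2 + f + 1 := by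
    funext i
    simp only [Pi.pow_apply, Pi.add_apply, Pi.one_apply, f]
    exact Cmat_pow
  have hM4 : M^4 = M^3 + M^2 + M + 1 := by
    show blockDiagonal f ^ 4 = _
    rw [← blockDiagonal_pow, hf, blockDiagonal_add, blockDiagonal_add, blockDiagonal_add,
      blockDiagonal_one, blockDiagonal_pow, blockDiagonal_pow]
  have hA4 : A^4 = A^3 + A^2 + A + 1 := by
    rw [hA, ← map_pow, ← map_pow, ← map_pow, hM4]
    simp [map_add]
  have htrΦ : ∀ X : Matrix (Fin 4 × Fin m) (Fin 4 × Fin m) (ZMod 2),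
      trace (Φ X) = trace X := by
    intro X
    show trace ((X.submatrix e.symm e.symm)) = trace X
    simp only [trace, diag, submatrix_apply]
    exact Equiv.sum_comp e.symm fun p => X p p
  have htr : trace ((1 : Matrix (Fin (8*k+4)) (Fin (8*k+4)) (ZMod 2)) + A + A^2 + A^3) = 1 := by
    have h1 : (1 : Matrix (Fin (8*k+4)) (Fin (8*k+4)) (ZMod 2)) + A + A^2 + A^3
        = Φ (1 + M + M^2 + M^3) := by
      rw [hA, ← map_pow, ← map_pow]
      simp [map_add]
    have h2 : (1 : Matrix (Fin 4 × Fin m) (Fin 4 × Fin m) (ZMod 2)) + M + M^2 + M^3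
        = blockDiagonal (fun _ : Fin m => 1 + Cmat + Cmat^2 + Cmat^3) := by
      show (1 : Matrix (Fin 4 × Fin m) (Fin 4 × Fin m) (ZMod 2)) + blockDiagonal f
          + blockDiagonal f^2 + blockDiagonal f^3 = _
      rw [← blockDiagonal_pow, ← blockDiagonal_pow, ← blockDiagonal_one (α := ZMod 2),
        ← blockDiagonal_add, ← blockDiagonal_add, ← blockDiagonal_add]
      rfl
    rw [h1, htrΦ, h2, trace_blockDiagonal]
    rw [Cmat_trace]
    simp only [Finset.sum_const, Finset.card_univ, Fintype.card_fin, nsmul_eq_mul, mul_one]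
    rw [hm]
    push_cast
    rw [show ((2:ZMod 2)) = 0 from by decide]
    ring
  have hP' : P*P = P := by rw [← pow_two]; exact hP
  have hQ' : A + P = Q := by
    have hPP : P + P = 0 := by
      ext i j
      simp only [Matrix.add_apply, Matrix.zero_apply]
      exact CharTwo.add_self_eq_zero _
    rw [hPQ]
    calc P + Q + P = Q + (P + P) := by abel
    _ = Q := by rw [hPP, add_zero]
  have h0 : trace ((A + P + P*A) * ((A+P)*((A+P)*(A+P)))) = 0 := by
    rw [hQ']
    have h3 : Q * (Q * Q) = 0 := by
      have h4 := hQ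
      rw [pow_succ, pow_two] at h4
      rw [show Q*(Q*Q) = Q*Q*Q from by noncomm_ring, h4]
    rw [h3, mul_zero, trace_zero]
  rw [key A P hP' hA4] at h0
  rw [htr] at h0
  exact one_ne_zero h0
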